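/- Let 𝓛 : ℝ^d → ℝ be L-smooth and bounded below by 𝓛⋆. On a probability space with filtration (𝓕_t), let θ^(0) be deterministic and define θ^(t+1) = θ^(t) − η (I + λ I_G^(t)) g_t, where λ ≥ 0, g_t is 𝓕_{t+1}-measurable with E[g_t | 𝓕_t] = ∇𝓛(θ^(t)) and E[‖g_t − ∇𝓛(θ^(t))‖² | 𝓕_t] ≤ σ², and I_G^(t) is an 𝓕_t-measurable symmetric positive semidefinite d×d matrix with ‖I_G^(t)‖_op ≤ G. If 0 < η ≤ 1/(L(1+λG)²), then for every T ≥ 1: (1/T) Σ_{t=0}^{T−1} E[‖(I + λ I_G^(t)) ∇𝓛(θ^(t))‖²] ≤ (1+λG)² · ( 2(𝓛(θ^(0)) − 𝓛⋆)/(ηT) + η·L·(1+λG)²·σ² ). -/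

import Mathlib

set_option maxHeartbeats 1000000

open MeasureTheory intervalIntegral
open scoped RealInnerProductSpace

section auxlemmas
variable {Ω : Type*} {m m0 : MeasurableSpace Ω} {μ : Measure Ω} {d : ℕ}
local notation "E" => EuclideanSpace ℝ (Fin d)


lemma aux_psd_sq (A : E →L[ℝ] E) (G : ℝ)
    (hsymm : ∀ v w, ⟪A v, w⟫ = ⟪v, A w⟫) (hpsd : ∀ v, 0 ≤ ⟪A v, v⟫)
    (hnorm : ‖A‖ ≤ G) (v : E) : ‖A v‖ ^ 2 ≤ G * ⟪A v, v⟫ := by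
  have hG : 0 ≤ G := le_trans (norm_nonneg _) hnorm
  by_cases h0 : A v = 0
  · simp [h0]
  have key : ∀ t : ℝ, 0 ≤ ⟪A (A v), A v⟫ * (t * t) + (2 * ⟪A v, A v⟫) * t + ⟪A v, v⟫ := by
    intro t
    have h := hpsd (v + t • A v)
    have hsw : ⟪A (A v), v⟫ = ⟪A v, A v⟫ := hsymm (A v) v
    have hexp : ⟪A (v + t • A v), v + t • A v⟫
        = ⟪A (A v), A v⟫ * (t * t) + (2 * ⟪A v, A v⟫) * t + ⟪A v, v⟫ := by
      simp only [map_add, ContinuousLinearMap.map_smul, inner_add_left, inner_add_right,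
        real_inner_smul_left, real_inner_smul_right]
      linear_combination t * hsw
    rw [hexp] at h; exact h
  have hdisc := discrim_le_zero key
  rw [discrim] at hdisc
  have h1 : ⟪A (A v), A v⟫ ≤ G * ‖A v‖ ^ 2 := by
    have hop : ‖A (A v)‖ ≤ G * ‖A v‖ :=
      le_trans (A.le_opNorm (A v)) (mul_le_mul_of_nonneg_right hnorm (norm_nonneg _))
    calc ⟪A (A v), A v⟫ ≤ ‖A (A v)‖ * ‖A v‖ := real_inner_le_norm _ _
      _ ≤ (G * ‖A v‖) * ‖A v‖ := mul_le_mul_of_nonneg_right hop (norm_nonneg _)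
      _ = G * ‖A v‖ ^ 2 := by ring
  have h2 : ⟪A v, A v⟫ = ‖A v‖ ^ 2 := real_inner_self_eq_norm_sq _
  have h3 : (0:ℝ) < ‖A v‖ := norm_pos_iff.mpr h0
  nlinarith [hpsd v, mul_le_mul_of_nonneg_right h1 (hpsd v), mul_pos h3 h3]

lemma aux_P_norm (A : E →L[ℝ] E) (lam G : ℝ) (hlam : 0 ≤ lam)
    (hnorm : ‖A‖ ≤ G) (v : E) : ‖v + lam • A v‖ ≤ (1 + lam * G) * ‖v‖ := by
  have h1 : ‖A v‖ ≤ G * ‖v‖ :=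
    le_trans (A.le_opNorm v) (mul_le_mul_of_nonneg_right hnorm (norm_nonneg _))
  calc ‖v + lam • A v‖ ≤ ‖v‖ + ‖lam • A v‖ := norm_add_le _ _
    _ = ‖v‖ + lam * ‖A v‖ := by rw [norm_smul, Real.norm_eq_abs, abs_of_nonneg hlam]
    _ ≤ (1 + lam * G) * ‖v‖ := by nlinarith

lemma aux_P_lower (A : E →L[ℝ] E) (lam G : ℝ) (hlam : 0 ≤ lam)
    (hsymm : ∀ v w, ⟪A v, w⟫ = ⟪v, A w⟫) (hpsd : ∀ v, 0 ≤ ⟪A v, v⟫)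
    (hnorm : ‖A‖ ≤ G) (v : E) :
    ‖v + lam • A v‖ ^ 2 ≤ (1 + lam * G) * ⟪v, v + lam • A v⟫ := by
  have hG : 0 ≤ G := le_trans (norm_nonneg _) hnorm
  have h1 : ‖A v‖ ^ 2 ≤ G * ⟪A v, v⟫ := aux_psd_sq A G hsymm hpsd hnorm v
  have h2 : ⟪A v, v⟫ ≤ G * ‖v‖ ^ 2 := by
    have hop : ‖A v‖ ≤ G * ‖v‖ :=
      le_trans (A.le_opNorm v) (mul_le_mul_of_nonneg_right hnorm (norm_nonneg _))
    calc ⟪A v, v⟫ ≤ ‖A v‖ * ‖v‖ := real_inner_le_norm _ _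
      _ ≤ (G * ‖v‖) * ‖v‖ := mul_le_mul_of_nonneg_right hop (norm_nonneg _)
      _ = G * ‖v‖ ^ 2 := by ring
  have hL : ‖v + lam • A v‖ ^ 2
      = ‖v‖ ^ 2 + 2 * lam * ⟪A v, v⟫ + lam ^ 2 * ‖A v‖ ^ 2 := by
    rw [norm_add_sq_real, norm_smul, real_inner_smul_right]
    rw [Real.norm_eq_abs, abs_of_nonneg hlam, real_inner_comm]
    ring
  have hR : ⟪v, v + lam • A v⟫ = ‖v‖ ^ 2 + lam * ⟪A v, v⟫ := by
    rw [inner_add_right, real_inner_smul_right, real_inner_self_eq_norm_sq, real_inner_comm]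
  rw [hL, hR]
  nlinarith [hpsd v]

lemma aux_descent (𝓛 : E → ℝ) (L : ℝ) (hL : 0 ≤ L)
    (hdiff : Differentiable ℝ 𝓛)
    (hsmooth : ∀ a b, ‖gradient 𝓛 a - gradient 𝓛 b‖ ≤ L * ‖a - b‖)
    (x v : E) :
    𝓛 (x + v) ≤ 𝓛 x + ⟪gradient 𝓛 x, v⟫ + L / 2 * ‖v‖ ^ 2 := by
  have hlip : LipschitzWith (Real.toNNReal L) (gradient 𝓛) := by
    apply LipschitzWith.of_dist_le_mul
    intro a b
    rw [dist_eq_norm, dist_eq_norm, Real.coe_toNNReal L hL]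
    exact hsmooth a b
  set D : ℝ → ℝ := fun s => ⟪gradient 𝓛 (x + s • v), v⟫ with hD
  have hline : ∀ s : ℝ, HasDerivAt (fun u : ℝ => x + u • v) v s := by
    intro s
    simpa using ((hasDerivAt_id s).smul_const v).const_add x
  have hderiv : ∀ s : ℝ, HasDerivAt (fun u : ℝ => 𝓛 (x + u • v)) (D s) s := by
    intro s
    have hg : HasFDerivAt 𝓛 (InnerProductSpace.toDual ℝ _ (gradient 𝓛 (x + s • v)))
        (x + s • v) :=
      hasGradientAt_iff_hasFDerivAt.mp (hdiff _).hasGradientAt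
    have := hg.comp_hasDerivAt s (hline s)
    rw [hD]; exact this
  have hcont : Continuous D := by
    apply Continuous.inner
    · exact hlip.continuous.comp (by continuity)
    · exact continuous_const
  have hInt : IntervalIntegrable D MeasureTheory.volume 0 1 := hcont.intervalIntegrable _ _
  have heq : ∫ s in (0:ℝ)..1, D s = 𝓛 (x + v) - 𝓛 x := by
    have := intervalIntegral.integral_eq_sub_of_hasDerivAt
      (f := fun u : ℝ => 𝓛 (x + u • v)) (fun s _ => hderiv s) hInt
    simpa using this
  have hb : ∀ s ∈ Set.Icc (0:ℝ) 1, D s ≤ D 0 + L * ‖v‖ ^ 2 * s := by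
    intro s hs
    have h1 : D s - D 0 = ⟪gradient 𝓛 (x + s • v) - gradient 𝓛 (x + (0:ℝ) • v), v⟫ := by
      rw [inner_sub_left]
    have h2 : ⟪gradient 𝓛 (x + s • v) - gradient 𝓛 (x + (0:ℝ) • v), v⟫
        ≤ L * s * ‖v‖ ^ 2 := by
      calc _ ≤ ‖gradient 𝓛 (x + s • v) - gradient 𝓛 (x + (0:ℝ) • v)‖ * ‖v‖ :=
            real_inner_le_norm _ _
        _ ≤ (L * ‖(x + s • v) - (x + (0:ℝ) • v)‖) * ‖v‖ :=
            mul_le_mul_of_nonneg_right (hsmooth _ _) (norm_nonneg _)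
        _ = (L * (s * ‖v‖)) * ‖v‖ := by
            rw [show (x + s • v) - (x + (0:ℝ) • v) = s • v by simp,
              norm_smul, Real.norm_eq_abs, abs_of_nonneg hs.1]
        _ = L * s * ‖v‖ ^ 2 := by ring
    linarith
  have hIb : ∫ s in (0:ℝ)..1, D s ≤ ∫ s in (0:ℝ)..1, (D 0 + L * ‖v‖ ^ 2 * s) := by
    apply intervalIntegral.integral_mono_on zero_le_one hInt
    · exact (continuous_const.add (continuous_const.mul continuous_id)).intervalIntegrable _ _
    · exact hb
  have hIr : ∫ s in (0:ℝ)..1, (D 0 + L * ‖v‖ ^ 2 * s) = D 0 + L / 2 * ‖v‖ ^ 2 := by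
    have h1 : IntervalIntegrable (fun s : ℝ => L * ‖v‖ ^ 2 * s) MeasureTheory.volume 0 1 :=
      (continuous_const.mul continuous_id).intervalIntegrable _ _
    rw [intervalIntegral.integral_add intervalIntegrable_const h1,
      intervalIntegral.integral_const]
    have h2 : ∫ s in (0:ℝ)..1, L * ‖v‖ ^ 2 * s = L * ‖v‖ ^ 2 * ∫ s in (0:ℝ)..1, s :=
      intervalIntegral.integral_const_mul _ _
    rw [h2, integral_id]
    norm_num
    ring
  have hD0 : D 0 = ⟪gradient 𝓛 x, v⟫ := by simp [hD]
  linarith [heq ▸ (hIb.trans_eq hIr), hD0 ▸ le_refl (D 0)]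

lemma aux_coord_le {d : ℕ} (x : EuclideanSpace ℝ (Fin d)) (i : Fin d) : |x i| ≤ ‖x‖ := by
  rw [EuclideanSpace.norm_eq]
  calc |x i| = Real.sqrt (‖x i‖ ^ 2) := by
        rw [Real.sqrt_sq_eq_abs, Real.norm_eq_abs, abs_abs]
    _ ≤ _ := by
        apply Real.sqrt_le_sqrt
        exact Finset.single_le_sum (fun j _ => sq_nonneg (‖x j‖)) (Finset.mem_univ i)

lemma aux_integrable_inner {d : ℕ} {f g : Ω → EuclideanSpace ℝ (Fin d)}
    (hf : MemLp f 2 μ) (hg : MemLp g 2 μ) :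
    Integrable (fun ω => ⟪f ω, g ω⟫) μ := by
  have hf2 : Integrable (fun ω => ‖f ω‖ ^ 2) μ := (memLp_two_iff_integrable_sq_norm hf.1).mp hf
  have hg2 : Integrable (fun ω => ‖g ω‖ ^ 2) μ := (memLp_two_iff_integrable_sq_norm hg.1).mp hg
  refine Integrable.mono' ((hf2.add hg2).div_const 2) (hf.1.inner hg.1) ?_
  filter_upwards with ω
  rw [Real.norm_eq_abs]
  calc |⟪f ω, g ω⟫| ≤ ‖f ω‖ * ‖g ω‖ := abs_real_inner_le_norm _ _
    _ ≤ (‖f ω‖ ^ 2 + ‖g ω‖ ^ 2) / 2 := by nlinarith [sq_nonneg (‖f ω‖ - ‖g ω‖)]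

lemma aux_condexp_clm {d : ℕ} (hm : m ≤ m0) [IsProbabilityMeasure μ]
    (T : EuclideanSpace ℝ (Fin d) →L[ℝ] ℝ) {f : Ω → EuclideanSpace ℝ (Fin d)}
    (hf : Integrable f μ) :
    μ[fun ω => T (f ω)|m] =ᵐ[μ] fun ω => T ((μ[f|m]) ω) := by
  refine (ae_eq_condExp_of_forall_setIntegral_eq hm (T.integrable_comp hf)
    (fun s _ _ => (T.integrable_comp integrable_condExp).integrableOn)
    (fun s hs hμs => ?_) ?_).symm
  · rw [T.integral_comp_comm integrable_condExp.integrableOn,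
      T.integral_comp_comm hf.integrableOn, setIntegral_condExp hm hf hs]
  · exact ⟨fun ω => T ((μ[f|m]) ω),
      T.continuous.comp_stronglyMeasurable stronglyMeasurable_condExp,
      Filter.EventuallyEq.rfl⟩

lemma aux_integral_inner_zero {d : ℕ} (hm : m ≤ m0) [IsProbabilityMeasure μ]
    {h n : Ω → EuclideanSpace ℝ (Fin d)}
    (hhm : StronglyMeasurable[m] h) (hh : MemLp h 2 μ) (hn : MemLp n 2 μ)
    (hcond : μ[n|m] =ᵐ[μ] 0) :
    ∫ ω, ⟪h ω, n ω⟫ ∂μ = 0 := by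
  have hf2 : Integrable (fun ω => ‖h ω‖ ^ 2) μ := (memLp_two_iff_integrable_sq_norm hh.1).mp hh
  have hg2 : Integrable (fun ω => ‖n ω‖ ^ 2) μ := (memLp_two_iff_integrable_sq_norm hn.1).mp hn
  have hint : ∀ i : Fin d, Integrable (fun ω => h ω i * n ω i) μ := by
    intro i
    refine Integrable.mono' ((hf2.add hg2).div_const 2) ?_ ?_
    · exact (((EuclideanSpace.proj i).continuous.comp_aestronglyMeasurable
        ((hhm.mono hm).aestronglyMeasurable)).mul
        ((EuclideanSpace.proj i).continuous.comp_aestronglyMeasurable hn.1))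
    · filter_upwards with ω
      rw [Real.norm_eq_abs, abs_mul]
      have h1 := aux_coord_le (h ω) i
      have h2 := aux_coord_le (n ω) i
      have := mul_le_mul h1 h2 (abs_nonneg _) (norm_nonneg _)
      simp only [Pi.add_apply]
      nlinarith [sq_nonneg (‖h ω‖ - ‖n ω‖)]
  have hcoord : (fun ω => ⟪h ω, n ω⟫) = fun ω => ∑ i, h ω i * n ω i := by
    funext ω
    simp [PiLp.inner_apply, RCLike.inner_apply, mul_comm]
  rw [hcoord, integral_finset_sum _ (fun i _ => hint i)]
  refine Finset.sum_eq_zero fun i _ => ?_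
  -- per-coordinate vanishing
  have hni : Integrable (fun ω => n ω i) μ := by
    have := (EuclideanSpace.proj (𝕜 := ℝ) i).integrable_comp (hn.integrable one_le_two)
    simpa [PiLp.proj_apply] using this
  have hhim : StronglyMeasurable[m] (fun ω => h ω i) := by
    have := (EuclideanSpace.proj (𝕜 := ℝ) i).continuous.comp_stronglyMeasurable hhm
    simpa [PiLp.proj_apply] using this
  have hpull := condExp_mul_of_stronglyMeasurable_left (μ := μ) (m := m) hhim
    (by exact hint i) hni
  have hzero : μ[fun ω => n ω i|m] =ᵐ[μ] 0 := by
    have h1 := aux_condexp_clm hm (EuclideanSpace.proj i) (hn.integrable one_le_two)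
    refine h1.trans ?_
    filter_upwards [hcond] with ω hω
    simp [hω]
  have : μ[fun ω => h ω i * n ω i|m] =ᵐ[μ] 0 := by
    refine hpull.trans ?_
    filter_upwards [hzero] with ω hω
    simp only [Pi.mul_apply, hω, Pi.zero_apply, mul_zero]
  rw [← integral_condExp hm (f := fun ω => h ω i * n ω i)]
  rw [integral_congr_ae this]
  simp


lemma aux_key (hm : m ≤ m0) [IsProbabilityMeasure μ]
    (𝓛 : E → ℝ) (L η lam G σ : ℝ)
    (hL : 0 < L) (hdiff : Differentiable ℝ 𝓛)
    (hsmooth : ∀ a b, ‖gradient 𝓛 a - gradient 𝓛 b‖ ≤ L * ‖a - b‖)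
    (hlam : 0 ≤ lam) (hG : 0 ≤ G) (hη : 0 < η)
    (hLη : L * η * (1 + lam * G) ^ 2 ≤ 1)
    (θt θt1 gt F n PF PPF : Ω → E) (A : Ω → (E →L[ℝ] E))
    (hF : ∀ ω, F ω = gradient 𝓛 (θt ω))
    (hn : ∀ ω, n ω = gt ω - F ω)
    (hPF : ∀ ω, PF ω = F ω + lam • A ω (F ω))
    (hPPF : ∀ ω, PPF ω = PF ω + lam • A ω (PF ω))
    (hupd : ∀ ω, θt1 ω = θt ω - η • (gt ω + lam • A ω (gt ω)))
    (hsymm : ∀ ω v w, ⟪A ω v, w⟫ = ⟪v, A ω w⟫)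
    (hpsd : ∀ ω v, 0 ≤ ⟪A ω v, v⟫)
    (hAnorm : ∀ ω, ‖A ω‖ ≤ G)
    (hPFm : StronglyMeasurable[m] PF) (hPPFm : StronglyMeasurable[m] PPF)
    (hF2 : MemLp F 2 μ) (hPF2 : MemLp PF 2 μ) (hPPF2 : MemLp PPF 2 μ)
    (hn2 : MemLp n 2 μ)
    (hncond : μ[n|m] =ᵐ[μ] 0)
    (hnsq_int : Integrable (fun ω => ‖n ω‖ ^ 2) μ)
    (hsint : ∫ ω, ‖n ω‖ ^ 2 ∂μ ≤ σ ^ 2)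
    (h𝓛t : Integrable (fun ω => 𝓛 (θt ω)) μ)
    (h𝓛t1 : Integrable (fun ω => 𝓛 (θt1 ω)) μ) :
    ∫ ω, ‖PF ω‖ ^ 2 ∂μ
      ≤ (2 * (1 + lam * G) / η) * ((∫ ω, 𝓛 (θt ω) ∂μ) - ∫ ω, 𝓛 (θt1 ω) ∂μ)
        + L * η * (1 + lam * G) ^ 3 * σ ^ 2 := by
  set κ := 1 + lam * G with hκdef
  have hκ1 : 1 ≤ κ := by simp [hκdef]; positivity
  have hκ0 : (0:ℝ) < κ := lt_of_lt_of_le one_pos hκ1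
  -- pointwise inequality
  have hpt : ∀ ω, 𝓛 (θt1 ω) ≤ 𝓛 (θt ω) + (-η) * ⟪F ω, PF ω⟫ + (-η) * ⟪PF ω, n ω⟫
      + (L / 2 * η ^ 2) * ‖PF ω‖ ^ 2 + (L * η ^ 2) * ⟪PPF ω, n ω⟫
      + (L / 2 * η ^ 2 * κ ^ 2) * ‖n ω‖ ^ 2 := by
    intro ω
    set Pg := gt ω + lam • A ω (gt ω) with hPgdef
    have hupd' : θt1 ω = θt ω + -(η • Pg) := by rw [hupd ω, sub_eq_add_neg]
    have hdesc := aux_descent 𝓛 L hL.le hdiff hsmooth (θt ω) (-(η • Pg))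
    rw [← hupd', ← hF ω] at hdesc
    have hgeq : gt ω = F ω + n ω := by rw [hn ω]; abel
    have hPg : Pg = PF ω + (n ω + lam • A ω (n ω)) := by
      rw [hPgdef, hgeq, hPF ω, map_add, smul_add]; abel
    have h1 : ⟪F ω, Pg⟫ = ⟪F ω, PF ω⟫ + ⟪PF ω, n ω⟫ := by
      rw [hPg]
      simp only [hPF, inner_add_left, inner_add_right, real_inner_smul_left,
        real_inner_smul_right]
      linear_combination (-lam) * hsymm ω (F ω) (n ω)
    have h2 : ‖Pg‖ ^ 2 = ‖PF ω‖ ^ 2 + 2 * ⟪PPF ω, n ω⟫ + ‖n ω + lam • A ω (n ω)‖ ^ 2 := by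
      rw [hPg, norm_add_sq_real]
      have : ⟪PF ω, n ω + lam • A ω (n ω)⟫ = ⟪PPF ω, n ω⟫ := by
        simp only [hPPF, inner_add_left, inner_add_right, real_inner_smul_left,
          real_inner_smul_right]
        linear_combination (-lam) * hsymm ω (PF ω) (n ω)
      -- coefficient fixed below if needed
      rw [this]
    have h3 : ‖n ω + lam • A ω (n ω)‖ ^ 2 ≤ κ ^ 2 * ‖n ω‖ ^ 2 := by
      have h3a : ‖n ω + lam • A ω (n ω)‖ ≤ κ * ‖n ω‖ := by
        rw [hκdef]; exact aux_P_norm (A ω) lam G hlam (hAnorm ω) (n ω)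
      have h3b := pow_le_pow_left₀ (norm_nonneg _) h3a 2
      rwa [mul_pow] at h3b
    have hip : ⟪F ω, -(η • Pg)⟫ = (-η) * ⟪F ω, Pg⟫ := by
      rw [inner_neg_right, real_inner_smul_right]; ring
    have hnp : ‖-(η • Pg)‖ ^ 2 = η ^ 2 * ‖Pg‖ ^ 2 := by
      rw [norm_neg, norm_smul, Real.norm_eq_abs, mul_pow, sq_abs]
    rw [hip, hnp, h1, h2] at hdesc
    have hco : (0:ℝ) ≤ L / 2 * η ^ 2 := by positivity
    nlinarith [mul_le_mul_of_nonneg_left h3 hco]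
  -- integrate
  have i2 : Integrable (fun ω => (-η) * ⟪F ω, PF ω⟫) μ :=
    (aux_integrable_inner hF2 hPF2).const_mul _
  have i3 : Integrable (fun ω => (-η) * ⟪PF ω, n ω⟫) μ :=
    (aux_integrable_inner hPF2 hn2).const_mul _
  have i4 : Integrable (fun ω => (L / 2 * η ^ 2) * ‖PF ω‖ ^ 2) μ :=
    ((memLp_two_iff_integrable_sq_norm hPF2.1).mp hPF2).const_mul _
  have i5 : Integrable (fun ω => (L * η ^ 2) * ⟪PPF ω, n ω⟫) μ :=
    (aux_integrable_inner hPPF2 hn2).const_mul _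
  have i6 : Integrable (fun ω => (L / 2 * η ^ 2 * κ ^ 2) * ‖n ω‖ ^ 2) μ :=
    hnsq_int.const_mul _
  have hInt : ∫ ω, 𝓛 (θt1 ω) ∂μ ≤ ∫ ω, (𝓛 (θt ω) + (-η) * ⟪F ω, PF ω⟫
      + (-η) * ⟪PF ω, n ω⟫ + (L / 2 * η ^ 2) * ‖PF ω‖ ^ 2
      + (L * η ^ 2) * ⟪PPF ω, n ω⟫ + (L / 2 * η ^ 2 * κ ^ 2) * ‖n ω‖ ^ 2) ∂μ :=
    integral_mono h𝓛t1 ((((((h𝓛t.add i2).add i3).add i4).add i5).add i6)) hpt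
  have j1 : Integrable (fun ω => 𝓛 (θt ω) + (-η) * ⟪F ω, PF ω⟫) μ := h𝓛t.add i2
  have j2 : Integrable (fun ω => 𝓛 (θt ω) + (-η) * ⟪F ω, PF ω⟫
      + (-η) * ⟪PF ω, n ω⟫) μ := j1.add i3
  have j3 : Integrable (fun ω => 𝓛 (θt ω) + (-η) * ⟪F ω, PF ω⟫
      + (-η) * ⟪PF ω, n ω⟫ + (L / 2 * η ^ 2) * ‖PF ω‖ ^ 2) μ := j2.add i4
  have j4 : Integrable (fun ω => 𝓛 (θt ω) + (-η) * ⟪F ω, PF ω⟫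
      + (-η) * ⟪PF ω, n ω⟫ + (L / 2 * η ^ 2) * ‖PF ω‖ ^ 2
      + (L * η ^ 2) * ⟪PPF ω, n ω⟫) μ := j3.add i5
  have e5 : ∫ ω, (𝓛 (θt ω) + (-η) * ⟪F ω, PF ω⟫ + (-η) * ⟪PF ω, n ω⟫
      + (L / 2 * η ^ 2) * ‖PF ω‖ ^ 2 + (L * η ^ 2) * ⟪PPF ω, n ω⟫
      + (L / 2 * η ^ 2 * κ ^ 2) * ‖n ω‖ ^ 2) ∂μ
      = (∫ ω, (𝓛 (θt ω) + (-η) * ⟪F ω, PF ω⟫ + (-η) * ⟪PF ω, n ω⟫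
      + (L / 2 * η ^ 2) * ‖PF ω‖ ^ 2 + (L * η ^ 2) * ⟪PPF ω, n ω⟫) ∂μ)
      + ∫ ω, (L / 2 * η ^ 2 * κ ^ 2) * ‖n ω‖ ^ 2 ∂μ := integral_add j4 i6
  have e4 : ∫ ω, (𝓛 (θt ω) + (-η) * ⟪F ω, PF ω⟫ + (-η) * ⟪PF ω, n ω⟫
      + (L / 2 * η ^ 2) * ‖PF ω‖ ^ 2 + (L * η ^ 2) * ⟪PPF ω, n ω⟫) ∂μ
      = (∫ ω, (𝓛 (θt ω) + (-η) * ⟪F ω, PF ω⟫ + (-η) * ⟪PF ω, n ω⟫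
      + (L / 2 * η ^ 2) * ‖PF ω‖ ^ 2) ∂μ)
      + ∫ ω, (L * η ^ 2) * ⟪PPF ω, n ω⟫ ∂μ := integral_add j3 i5
  have e3 : ∫ ω, (𝓛 (θt ω) + (-η) * ⟪F ω, PF ω⟫ + (-η) * ⟪PF ω, n ω⟫
      + (L / 2 * η ^ 2) * ‖PF ω‖ ^ 2) ∂μ
      = (∫ ω, (𝓛 (θt ω) + (-η) * ⟪F ω, PF ω⟫ + (-η) * ⟪PF ω, n ω⟫) ∂μ)
      + ∫ ω, (L / 2 * η ^ 2) * ‖PF ω‖ ^ 2 ∂μ := integral_add j2 i4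
  have e2 : ∫ ω, (𝓛 (θt ω) + (-η) * ⟪F ω, PF ω⟫ + (-η) * ⟪PF ω, n ω⟫) ∂μ
      = (∫ ω, (𝓛 (θt ω) + (-η) * ⟪F ω, PF ω⟫) ∂μ)
      + ∫ ω, (-η) * ⟪PF ω, n ω⟫ ∂μ := integral_add j1 i3
  have e1 : ∫ ω, (𝓛 (θt ω) + (-η) * ⟪F ω, PF ω⟫) ∂μ
      = (∫ ω, 𝓛 (θt ω) ∂μ) + ∫ ω, (-η) * ⟪F ω, PF ω⟫ ∂μ := integral_add h𝓛t i2
  have c2 : ∫ ω, (-η) * ⟪F ω, PF ω⟫ ∂μ = (-η) * ∫ ω, ⟪F ω, PF ω⟫ ∂μ :=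
    integral_const_mul _ _
  have c3 : ∫ ω, (-η) * ⟪PF ω, n ω⟫ ∂μ = (-η) * ∫ ω, ⟪PF ω, n ω⟫ ∂μ :=
    integral_const_mul _ _
  have c4 : ∫ ω, (L / 2 * η ^ 2) * ‖PF ω‖ ^ 2 ∂μ
      = (L / 2 * η ^ 2) * ∫ ω, ‖PF ω‖ ^ 2 ∂μ := integral_const_mul _ _
  have c5 : ∫ ω, (L * η ^ 2) * ⟪PPF ω, n ω⟫ ∂μ
      = (L * η ^ 2) * ∫ ω, ⟪PPF ω, n ω⟫ ∂μ := integral_const_mul _ _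
  have c6 : ∫ ω, (L / 2 * η ^ 2 * κ ^ 2) * ‖n ω‖ ^ 2 ∂μ
      = (L / 2 * η ^ 2 * κ ^ 2) * ∫ ω, ‖n ω‖ ^ 2 ∂μ := integral_const_mul _ _
  rw [e5, e4, e3, e2, e1, c2, c3, c4, c5, c6] at hInt
  have z1 : ∫ ω, ⟪PF ω, n ω⟫ ∂μ = 0 :=
    aux_integral_inner_zero hm hPFm hPF2 hn2 hncond
  have z2 : ∫ ω, ⟪PPF ω, n ω⟫ ∂μ = 0 :=
    aux_integral_inner_zero hm hPPFm hPPF2 hn2 hncond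
  rw [z1, z2] at hInt
  set It := ∫ ω, 𝓛 (θt ω) ∂μ
  set It1 := ∫ ω, 𝓛 (θt1 ω) ∂μ
  set b := ∫ ω, ⟪F ω, PF ω⟫ ∂μ
  set c := ∫ ω, ‖PF ω‖ ^ 2 ∂μ
  set s := ∫ ω, ‖n ω‖ ^ 2 ∂μ
  have hb_lower : c ≤ κ * b := by
    have hptl : ∀ ω, ‖PF ω‖ ^ 2 ≤ κ * ⟪F ω, PF ω⟫ := by
      intro ω
      have := aux_P_lower (A ω) lam G hlam (hsymm ω) (hpsd ω) (hAnorm ω) (F ω)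
      rw [hPF ω]
      exact this
    calc c ≤ ∫ ω, κ * ⟪F ω, PF ω⟫ ∂μ :=
          integral_mono ((memLp_two_iff_integrable_sq_norm hPF2.1).mp hPF2)
            ((aux_integrable_inner hF2 hPF2).const_mul κ) hptl
      _ = κ * b := integral_const_mul _ _
  have hc0 : (0:ℝ) ≤ c := integral_nonneg (fun ω => sq_nonneg _)
  have hs0 : (0:ℝ) ≤ s := integral_nonneg (fun ω => sq_nonneg _)
  -- arithmetic
  clear_value κ It It1 b c s
  have step1 : η * b - (L / 2 * η ^ 2) * c - (L / 2 * η ^ 2 * κ ^ 2) * s ≤ It - It1 := by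
    linarith [hInt]
  have step1' : (2 * κ) * (η * b - (L / 2 * η ^ 2) * c - (L / 2 * η ^ 2 * κ ^ 2) * s)
      ≤ (2 * κ) * (It - It1) :=
    mul_le_mul_of_nonneg_left step1 (by positivity)
  have step2' : (L * η ^ 2 * κ ^ 3) * s ≤ (L * η ^ 2 * κ ^ 3) * σ ^ 2 :=
    mul_le_mul_of_nonneg_left hsint (by positivity)
  have step3 : η * c ≤ η * (κ * b) := mul_le_mul_of_nonneg_left hb_lower hη.le
  have step4 : L * η * κ ≤ 1 := by nlinarith [mul_pos hL hη]
  have step5 : (L * η * κ) * (η * c) ≤ 1 * (η * c) :=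
    mul_le_mul_of_nonneg_right step4 (by positivity)
  have hmain : η * c ≤ 2 * κ * (It - It1) + L * η ^ 2 * κ ^ 3 * σ ^ 2 := by
    linarith [step1', step2', step3, step5]
  have hdiv : c ≤ (2 * κ * (It - It1) + L * η ^ 2 * κ ^ 3 * σ ^ 2) / η := by
    rw [le_div_iff₀ hη]; linarith [hmain]
  have heq2 : (2 * κ * (It - It1) + L * η ^ 2 * κ ^ 3 * σ ^ 2) / η
      = (2 * κ / η) * (It - It1) + L * η * κ ^ 3 * σ ^ 2 := by
    field_simp
  linarith [hdiv, heq2.le, heq2.ge]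

end auxlemmas

open MeasureTheory
open scoped RealInnerProductSpace

/-- average preconditioned-gradient-norm bound for FIRE. -/
theorem fire_average_preconditioned_gradient_bound
    {d : ℕ} {Ω : Type*} {m0 : MeasurableSpace Ω}
    (μ : Measure Ω) [IsProbabilityMeasure μ] (ℱ : Filtration ℕ m0)
    (𝓛 : EuclideanSpace ℝ (Fin d) → ℝ) (L Lstar : ℝ) (hL : 0 < L)
    (hdiff : Differentiable ℝ 𝓛)
    (hsmooth : ∀ a b, ‖gradient 𝓛 a - gradient 𝓛 b‖ ≤ L * ‖a - b‖)
    (hbdd : ∀ p, Lstar ≤ 𝓛 p)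
    (η lam G σ : ℝ) (hlam : 0 ≤ lam) (hG : 0 ≤ G)
    (hη : 0 < η) (hη' : η ≤ 1 / (L * (1 + lam * G) ^ 2))
    (θ g : ℕ → Ω → EuclideanSpace ℝ (Fin d))
    (IG : ℕ → Ω → (EuclideanSpace ℝ (Fin d) →L[ℝ] EuclideanSpace ℝ (Fin d)))
    (θ0 : EuclideanSpace ℝ (Fin d)) (hθ0 : θ 0 = fun _ => θ0)
    (hupdate : ∀ t ω, θ (t + 1) ω = θ t ω - η • (g t ω + lam • (IG t ω) (g t ω)))
    (hg_meas : ∀ t, StronglyMeasurable[ℱ (t + 1)] (g t))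
    (hg_int : ∀ t, Integrable (g t) μ)
    (hmean : ∀ t, μ[g t | ℱ t] =ᵐ[μ] fun ω => gradient 𝓛 (θ t ω))
    (hvar_int : ∀ t, Integrable (fun ω => ‖g t ω - gradient 𝓛 (θ t ω)‖ ^ 2) μ)
    (hvar : ∀ t, μ[fun ω => ‖g t ω - gradient 𝓛 (θ t ω)‖ ^ 2 | ℱ t]
      ≤ᵐ[μ] fun _ => σ ^ 2)
    (hIG_meas : ∀ t, StronglyMeasurable[ℱ t] (IG t))
    (hIG_symm : ∀ t ω v w, ⟪(IG t ω) v, w⟫ = ⟪v, (IG t ω) w⟫)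
    (hIG_psd : ∀ t ω v, 0 ≤ ⟪(IG t ω) v, v⟫)
    (hIG_norm : ∀ t ω, ‖IG t ω‖ ≤ G) :
    ∀ T : ℕ, 1 ≤ T →
      (1 / (T : ℝ)) * ∑ t ∈ Finset.range T,
          ∫ ω, ‖gradient 𝓛 (θ t ω) + lam • (IG t ω) (gradient 𝓛 (θ t ω))‖ ^ 2 ∂μ
        ≤ (1 + lam * G) ^ 2
          * (2 * (𝓛 θ0 - Lstar) / (η * T)
              + η * L * (1 + lam * G) ^ 2 * σ ^ 2) := by
  intro T hT
  have hκ1 : (1:ℝ) ≤ 1 + lam * G := by nlinarith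
  have hκ0 : (0:ℝ) < 1 + lam * G := lt_of_lt_of_le one_pos hκ1
  have hηκ : L * η * (1 + lam * G) ^ 2 ≤ 1 := by
    have hpos : (0:ℝ) < L * (1 + lam * G) ^ 2 := by positivity
    rw [le_div_iff₀ hpos] at hη'
    nlinarith [hη']
  have hgradcont : Continuous (gradient 𝓛) := by
    have hlip : LipschitzWith (Real.toNNReal L) (gradient 𝓛) :=
      LipschitzWith.of_dist_le_mul (fun a b => by
        rw [dist_eq_norm, dist_eq_norm, Real.coe_toNNReal L hL.le]; exact hsmooth a b)
    exact hlip.continuous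
  have happly : ∀ {m' : MeasurableSpace Ω}
      {φ : Ω → (EuclideanSpace ℝ (Fin d) →L[ℝ] EuclideanSpace ℝ (Fin d))}
      {f : Ω → EuclideanSpace ℝ (Fin d)},
      StronglyMeasurable[m'] φ → StronglyMeasurable[m'] f →
      StronglyMeasurable[m'] (fun ω => φ ω (f ω)) := by
    intro m' φ f hφ hf
    exact isBoundedBilinearMap_apply.continuous.comp_stronglyMeasurable (hφ.prodMk hf)
  -- measurability of θ
  have hθmeas : ∀ t, StronglyMeasurable[ℱ t] (θ t) := by
    intro t; induction t with
    | zero => rw [hθ0]; exact stronglyMeasurable_const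
    | succ t ih =>
      have he : θ (t + 1) = fun ω => θ t ω - η • (g t ω + lam • (IG t ω) (g t ω)) :=
        funext (hupdate t)
      rw [he]
      exact (ih.mono (ℱ.mono (Nat.le_succ t))).sub
        (((hg_meas t).add ((happly ((hIG_meas t).mono (ℱ.mono (Nat.le_succ t)))
          (hg_meas t)).const_smul lam)).const_smul η)
  have hFmeas : ∀ t, StronglyMeasurable[ℱ t] (fun ω => gradient 𝓛 (θ t ω)) :=
    fun t => hgradcont.comp_stronglyMeasurable (hθmeas t)
  -- noise in L²
  have hnL2 : ∀ t, MemLp (fun ω => g t ω - gradient 𝓛 (θ t ω)) 2 μ := by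
    intro t
    refine (memLp_two_iff_integrable_sq_norm ?_).mpr (hvar_int t)
    exact (((hg_meas t).mono (ℱ.le _)).sub ((hFmeas t).mono (ℱ.le _))).aestronglyMeasurable
  -- gradient at iterates in L²
  have hFbound : ∀ x, ‖gradient 𝓛 x‖ ≤ ‖gradient 𝓛 θ0‖ + L * ‖x - θ0‖ := by
    intro x
    have h1 := hsmooth x θ0
    have h2 := norm_sub_norm_le (gradient 𝓛 x) (gradient 𝓛 θ0)
    linarith
  have hFL2aux : ∀ t, MemLp (θ t) 2 μ →
      MemLp (fun ω => gradient 𝓛 (θ t ω)) 2 μ := by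
    intro t ht
    have hb : MemLp (fun ω => ‖gradient 𝓛 θ0‖ + L * ‖θ t ω - θ0‖) 2 μ :=
      by have := (memLp_const (μ := μ) (p := 2) ‖gradient 𝓛 θ0‖).add
          (((ht.sub (memLp_const θ0)).norm).const_mul L); exact this
    refine MemLp.of_le hb ((hFmeas t).mono (ℱ.le t)).aestronglyMeasurable ?_
    filter_upwards with ω
    exact (hFbound (θ t ω)).trans (le_abs_self _)
  have hθL2 : ∀ t, MemLp (θ t) 2 μ := by
    intro t; induction t with
    | zero => rw [hθ0]; exact memLp_const θ0
    | succ t ih =>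
      have hF2 := hFL2aux t ih
      have hg2 : MemLp (g t) 2 μ := by
        have h := hF2.add (hnL2 t)
        have he : ((fun ω => gradient 𝓛 (θ t ω)) + fun ω => g t ω - gradient 𝓛 (θ t ω))
            = g t := by
          funext ω; simp [Pi.add_apply]
        rwa [he] at h
      have hIGg2 : MemLp (fun ω => (IG t ω) (g t ω)) 2 μ := by
        refine MemLp.of_le (hg2.norm.const_mul G)
          (((happly ((hIG_meas t).mono (ℱ.mono (Nat.le_succ t))) (hg_meas t)).mono
            (ℱ.le (t + 1))).aestronglyMeasurable) ?_
        filter_upwards with ω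
        have h1 : ‖(IG t ω) (g t ω)‖ ≤ G * ‖g t ω‖ :=
          le_trans ((IG t ω).le_opNorm _)
            (mul_le_mul_of_nonneg_right (hIG_norm t ω) (norm_nonneg _))
        exact h1.trans (le_abs_self _)
      have he : θ (t + 1) = fun ω => θ t ω - η • (g t ω + lam • (IG t ω) (g t ω)) :=
        funext (hupdate t)
      rw [he]
      exact ih.sub ((hg2.add (hIGg2.const_smul lam)).const_smul η)
  have hFL2 : ∀ t, MemLp (fun ω => gradient 𝓛 (θ t ω)) 2 μ :=
    fun t => hFL2aux t (hθL2 t)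
  -- PF / PPF measurability and L² bounds
  have hPFmeas : ∀ t, StronglyMeasurable[ℱ t]
      (fun ω => gradient 𝓛 (θ t ω) + lam • (IG t ω) (gradient 𝓛 (θ t ω))) :=
    fun t => (hFmeas t).add ((happly (hIG_meas t) (hFmeas t)).const_smul lam)
  have hPF2 : ∀ t, MemLp
      (fun ω => gradient 𝓛 (θ t ω) + lam • (IG t ω) (gradient 𝓛 (θ t ω))) 2 μ := by
    intro t
    refine MemLp.of_le ((hFL2 t).norm.const_mul (1 + lam * G))
      (((hPFmeas t).mono (ℱ.le t)).aestronglyMeasurable) ?_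
    filter_upwards with ω
    exact (aux_P_norm (IG t ω) lam G hlam (hIG_norm t ω) _).trans (le_abs_self _)
  have hPPFmeas : ∀ t, StronglyMeasurable[ℱ t]
      (fun ω => (gradient 𝓛 (θ t ω) + lam • (IG t ω) (gradient 𝓛 (θ t ω)))
        + lam • (IG t ω) (gradient 𝓛 (θ t ω) + lam • (IG t ω) (gradient 𝓛 (θ t ω)))) :=
    fun t => (hPFmeas t).add ((happly (hIG_meas t) (hPFmeas t)).const_smul lam)
  have hPPF2 : ∀ t, MemLp
      (fun ω => (gradient 𝓛 (θ t ω) + lam • (IG t ω) (gradient 𝓛 (θ t ω)))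
        + lam • (IG t ω) (gradient 𝓛 (θ t ω) + lam • (IG t ω) (gradient 𝓛 (θ t ω)))) 2 μ := by
    intro t
    refine MemLp.of_le ((hPF2 t).norm.const_mul (1 + lam * G))
      (((hPPFmeas t).mono (ℱ.le t)).aestronglyMeasurable) ?_
    filter_upwards with ω
    exact (aux_P_norm (IG t ω) lam G hlam (hIG_norm t ω) _).trans (le_abs_self _)
  -- integrability of 𝓛 ∘ θ t
  have h𝓛int : ∀ t, Integrable (fun ω => 𝓛 (θ t ω)) μ := by
    intro t
    have hU_int : Integrable (fun ω => 𝓛 θ0 + ‖gradient 𝓛 θ0‖ * ‖θ t ω - θ0‖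
        + L / 2 * ‖θ t ω - θ0‖ ^ 2) μ := by
      have h1 : Integrable (fun ω => ‖θ t ω - θ0‖) μ :=
        ((hθL2 t).sub (memLp_const θ0)).norm.integrable one_le_two
      have h2 : Integrable (fun ω => ‖θ t ω - θ0‖ ^ 2) μ :=
        (memLp_two_iff_integrable_sq_norm ((hθL2 t).sub (memLp_const θ0)).1).mp
          ((hθL2 t).sub (memLp_const θ0))
      exact ((integrable_const _).add (h1.const_mul _)).add (h2.const_mul _)
    have hle : ∀ ω, 𝓛 (θ t ω) ≤ 𝓛 θ0 + ‖gradient 𝓛 θ0‖ * ‖θ t ω - θ0‖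
        + L / 2 * ‖θ t ω - θ0‖ ^ 2 := by
      intro ω
      have hdesc := aux_descent 𝓛 L hL.le hdiff hsmooth θ0 (θ t ω - θ0)
      rw [add_sub_cancel] at hdesc
      have hip : ⟪gradient 𝓛 θ0, θ t ω - θ0⟫ ≤ ‖gradient 𝓛 θ0‖ * ‖θ t ω - θ0‖ :=
        real_inner_le_norm _ _
      linarith
    refine Integrable.mono' (g := fun ω => |Lstar| + |𝓛 θ0 + ‖gradient 𝓛 θ0‖ * ‖θ t ω - θ0‖
        + L / 2 * ‖θ t ω - θ0‖ ^ 2|) ((integrable_const _).add hU_int.abs)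
      ((hdiff.continuous.comp_stronglyMeasurable
        ((hθmeas t).mono (ℱ.le t))).aestronglyMeasurable) ?_
    filter_upwards with ω
    rw [Real.norm_eq_abs, abs_le]
    constructor
    · have := neg_abs_le Lstar
      have h0 := abs_nonneg (𝓛 θ0 + ‖gradient 𝓛 θ0‖ * ‖θ t ω - θ0‖ + L / 2 * ‖θ t ω - θ0‖ ^ 2)
      linarith [hbdd (θ t ω)]
    · have := le_abs_self (𝓛 θ0 + ‖gradient 𝓛 θ0‖ * ‖θ t ω - θ0‖ + L / 2 * ‖θ t ω - θ0‖ ^ 2)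
      have := hle ω
      have := abs_nonneg Lstar
      linarith
  -- conditional expectation of noise vanishes
  have hFint : ∀ t, Integrable (fun ω => gradient 𝓛 (θ t ω)) μ :=
    fun t => (hFL2 t).integrable one_le_two
  have hncond : ∀ t, μ[(fun ω => g t ω - gradient 𝓛 (θ t ω))|ℱ t] =ᵐ[μ] 0 := by
    intro t
    have hsub : μ[(fun ω => g t ω - gradient 𝓛 (θ t ω))|ℱ t]
        =ᵐ[μ] μ[g t|ℱ t] - μ[(fun ω => gradient 𝓛 (θ t ω))|ℱ t] :=
      condExp_sub (hg_int t) (hFint t) _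
    have hFc : μ[(fun ω => gradient 𝓛 (θ t ω))|ℱ t] = fun ω => gradient 𝓛 (θ t ω) :=
      condExp_of_stronglyMeasurable (ℱ.le t) (hFmeas t) (hFint t)
    refine hsub.trans ?_
    rw [hFc]
    filter_upwards [hmean t] with ω h1
    simp [Pi.sub_apply, h1]
  -- variance bound
  have hsint : ∀ t, ∫ ω, ‖g t ω - gradient 𝓛 (θ t ω)‖ ^ 2 ∂μ ≤ σ ^ 2 := by
    intro t
    have h1 : ∫ ω, ‖g t ω - gradient 𝓛 (θ t ω)‖ ^ 2 ∂μ
        = ∫ ω, (μ[fun ω => ‖g t ω - gradient 𝓛 (θ t ω)‖ ^ 2|ℱ t]) ω ∂μ :=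
      (integral_condExp (ℱ.le t)).symm
    rw [h1]
    calc _ ≤ ∫ (_ : Ω), σ ^ 2 ∂μ :=
          integral_mono_ae integrable_condExp (integrable_const _) (hvar t)
      _ = σ ^ 2 := by simp
  -- key per-step bound
  have key : ∀ t, ∫ ω, ‖gradient 𝓛 (θ t ω) + lam • (IG t ω) (gradient 𝓛 (θ t ω))‖ ^ 2 ∂μ
      ≤ (2 * (1 + lam * G) / η) * ((∫ ω, 𝓛 (θ t ω) ∂μ) - ∫ ω, 𝓛 (θ (t + 1) ω) ∂μ)
        + L * η * (1 + lam * G) ^ 3 * σ ^ 2 := by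
    intro t
    exact aux_key (ℱ.le t) 𝓛 L η lam G σ hL hdiff hsmooth hlam hG hη hηκ
      (θ t) (θ (t + 1)) (g t)
      (fun ω => gradient 𝓛 (θ t ω))
      (fun ω => g t ω - gradient 𝓛 (θ t ω))
      (fun ω => gradient 𝓛 (θ t ω) + lam • (IG t ω) (gradient 𝓛 (θ t ω)))
      (fun ω => (gradient 𝓛 (θ t ω) + lam • (IG t ω) (gradient 𝓛 (θ t ω)))
        + lam • (IG t ω) (gradient 𝓛 (θ t ω) + lam • (IG t ω) (gradient 𝓛 (θ t ω))))
      (IG t)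
      (fun ω => rfl) (fun ω => rfl) (fun ω => rfl) (fun ω => rfl) (hupdate t)
      (hIG_symm t) (hIG_psd t) (hIG_norm t)
      (hPFmeas t) (hPPFmeas t) (hFL2 t) (hPF2 t) (hPPF2 t) (hnL2 t) (hncond t)
      (hvar_int t) (hsint t) (h𝓛int t) (h𝓛int (t + 1))
  -- telescoping
  have hsum : ∑ t ∈ Finset.range T,
      ∫ ω, ‖gradient 𝓛 (θ t ω) + lam • (IG t ω) (gradient 𝓛 (θ t ω))‖ ^ 2 ∂μ
      ≤ (2 * (1 + lam * G) / η) * ((∫ ω, 𝓛 (θ 0 ω) ∂μ) - ∫ ω, 𝓛 (θ T ω) ∂μ)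
        + (T : ℝ) * (L * η * (1 + lam * G) ^ 3 * σ ^ 2) := by
    calc _ ≤ ∑ t ∈ Finset.range T,
          ((2 * (1 + lam * G) / η) * ((∫ ω, 𝓛 (θ t ω) ∂μ) - ∫ ω, 𝓛 (θ (t + 1) ω) ∂μ)
            + L * η * (1 + lam * G) ^ 3 * σ ^ 2) :=
        Finset.sum_le_sum (fun t _ => key t)
      _ = (2 * (1 + lam * G) / η)
            * (∑ t ∈ Finset.range T, ((∫ ω, 𝓛 (θ t ω) ∂μ) - ∫ ω, 𝓛 (θ (t + 1) ω) ∂μ))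
          + (T : ℝ) * (L * η * (1 + lam * G) ^ 3 * σ ^ 2) := by
        rw [Finset.sum_add_distrib, ← Finset.mul_sum, Finset.sum_const, Finset.card_range,
          nsmul_eq_mul]
      _ = _ := by
        rw [Finset.sum_range_sub' (fun t => ∫ ω, 𝓛 (θ t ω) ∂μ)]
  have ha0 : (∫ ω, 𝓛 (θ 0 ω) ∂μ) = 𝓛 θ0 := by rw [hθ0]; simp
  have haT : Lstar ≤ ∫ ω, 𝓛 (θ T ω) ∂μ := by
    calc Lstar = ∫ (_ : Ω), Lstar ∂μ := by simp
      _ ≤ _ := integral_mono (integrable_const _) (h𝓛int T) (fun ω => hbdd _)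
  have hTpos : (0:ℝ) < (T : ℝ) := by
    have : (1:ℝ) ≤ (T:ℝ) := by exact_mod_cast hT
    linarith
  have hΔ : 0 ≤ 𝓛 θ0 - Lstar := sub_nonneg.mpr (hbdd θ0)
  have hsum2 : ∑ t ∈ Finset.range T,
      ∫ ω, ‖gradient 𝓛 (θ t ω) + lam • (IG t ω) (gradient 𝓛 (θ t ω))‖ ^ 2 ∂μ
      ≤ (2 * (1 + lam * G) / η) * (𝓛 θ0 - Lstar)
        + (T : ℝ) * (L * η * (1 + lam * G) ^ 3 * σ ^ 2) := by
    refine hsum.trans ?_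
    have h1 : (∫ ω, 𝓛 (θ 0 ω) ∂μ) - ∫ ω, 𝓛 (θ T ω) ∂μ ≤ 𝓛 θ0 - Lstar := by
      rw [ha0]; linarith
    have h2 : (0:ℝ) ≤ 2 * (1 + lam * G) / η := by positivity
    nlinarith [mul_le_mul_of_nonneg_left h1 h2]
  have hmul := mul_le_mul_of_nonneg_left hsum2 (by positivity : (0:ℝ) ≤ 1 / (T : ℝ))
  refine hmul.trans ?_
  have heq : (1 / (T : ℝ)) * ((2 * (1 + lam * G) / η) * (𝓛 θ0 - Lstar)
      + (T : ℝ) * (L * η * (1 + lam * G) ^ 3 * σ ^ 2))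
      = 2 * (1 + lam * G) * (𝓛 θ0 - Lstar) / (η * (T : ℝ))
        + L * η * (1 + lam * G) ^ 3 * σ ^ 2 := by
    field_simp
  rw [heq]
  have hre : (1 + lam * G) ^ 2 * (2 * (𝓛 θ0 - Lstar) / (η * (T : ℝ))
      + η * L * (1 + lam * G) ^ 2 * σ ^ 2)
      = 2 * (1 + lam * G) ^ 2 * (𝓛 θ0 - Lstar) / (η * (T : ℝ))
        + L * η * (1 + lam * G) ^ 4 * σ ^ 2 := by
    field_simp
  rw [hre]
  have hA : 2 * (1 + lam * G) * (𝓛 θ0 - Lstar) / (η * (T : ℝ))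
      ≤ 2 * (1 + lam * G) ^ 2 * (𝓛 θ0 - Lstar) / (η * (T : ℝ)) := by
    gcongr
    nlinarith [hΔ, hκ1]
  have h34 : (1 + lam * G) ^ 3 ≤ (1 + lam * G) ^ 4 :=
    pow_le_pow_right₀ hκ1 (by norm_num)
  have hB : L * η * (1 + lam * G) ^ 3 * σ ^ 2 ≤ L * η * (1 + lam * G) ^ 4 * σ ^ 2 := by
    have := mul_le_mul_of_nonneg_right
      (mul_le_mul_of_nonneg_left h34 (mul_pos hL hη).le) (sq_nonneg σ)
    linarith [this]
  linarith
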